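/- arXiv:1401.0315 — 2 statements merged into one kernel-verified Lean document; each statement's English description precedes it below -/
import Mathlib

section
/- Let B be a V-category with V-kernel-pairs. Then StrMono_V B = (Epi_V B)^{↓V}, i.e. every morphism V-orthogonal on the right to all V-epimorphisms is automatically a V-monomorphism. If moreover B has V-cokernel-pairs, then Epi_V B = (StrMono_V B)^{↑V}; in particular (Epi_V B, StrMono_V B) is a V-prefactorization system on B. -/
open CategoryTheory CategoryTheory.Limits CategoryTheory.MonoidalCategory

universe w v₁ v₂ v₃ v₄ u₁ u₂ u₃ u₄

namespace EnrichedFS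

variable (V : Type u₁) [Category.{v₁} V] [MonoidalCategory V] [SymmetricCategory V]
  [MonoidalClosed V]
variable (B : Type u₂) [Category.{v₂} B] [EnrichedOrdinaryCategory V B]

/-- `e` is `V`-orthogonal to `m`: the square of hom-objects
with top `B(A₂,m)`, left `B(e,X₁)`, right `B(e,X₂)`, bottom `B(A₁,m)`
is a pullback in `V`. -/
def VOrth {A₁ A₂ X₁ X₂ : B} (e : A₁ ⟶ A₂) (m : X₁ ⟶ X₂) : Prop :=
  IsPullback (eHomWhiskerLeft V A₂ m) (eHomWhiskerRight V e X₁)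
    (eHomWhiskerRight V e X₂) (eHomWhiskerLeft V A₁ m)

/-- `H^{↓V}`: the class of morphisms to which every member of `H` is `V`-orthogonal. -/
def vRlp (H : MorphismProperty B) : MorphismProperty B :=
  fun _ _ m => ∀ ⦃A₁ A₂ : B⦄ (e : A₁ ⟶ A₂), H e → VOrth V B e m

/-- `M^{↑V}`: the class of morphisms which are `V`-orthogonal to every member of `M`. -/
def vLlp (M : MorphismProperty B) : MorphismProperty B :=
  fun _ _ e => ∀ ⦃X₁ X₂ : B⦄ (m : X₁ ⟶ X₂), M m → VOrth V B e m

/-- ordinary orthogonality: unique diagonal fillers for every commutative square. -/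
def OrdOrth {A₁ A₂ X₁ X₂ : B} (e : A₁ ⟶ A₂) (m : X₁ ⟶ X₂) : Prop :=
  ∀ (u : A₁ ⟶ X₁) (v : A₂ ⟶ X₂), u ≫ m = e ≫ v →
    ∃! d : A₂ ⟶ X₁, e ≫ d = u ∧ d ≫ m = v

/-- `H^{↓}` (ordinary). -/
def ordRlp (H : MorphismProperty B) : MorphismProperty B :=
  fun _ _ m => ∀ ⦃A₁ A₂ : B⦄ (e : A₁ ⟶ A₂), H e → OrdOrth B e m

/-- `M^{↑}` (ordinary). -/
def ordLlp (M : MorphismProperty B) : MorphismProperty B :=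
  fun _ _ e => ∀ ⦃X₁ X₂ : B⦄ (m : X₁ ⟶ X₂), M m → OrdOrth B e m

/-- `(E,M)` is a `V`-prefactorization system: `E^{↓V} = M` and `M^{↑V} = E`. -/
def IsVPrefactorization (E M : MorphismProperty B) : Prop :=
  vRlp V B E = M ∧ vLlp V B M = E

/-- `(E,M)` is an ordinary prefactorization system. -/
def IsOrdPrefactorization (E M : MorphismProperty B) : Prop :=
  ordRlp B E = M ∧ ordLlp B M = E

/-- every morphism factors as a morphism in `E` followed by a morphism in `M`. -/
def FactorizationsExist (E M : MorphismProperty B) : Prop :=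
  ∀ ⦃X Y : B⦄ (f : X ⟶ Y), ∃ (Z : B) (e : X ⟶ Z) (m : Z ⟶ Y), E e ∧ M m ∧ e ≫ m = f

/-- `(E,M)` is a `V`-factorization system. -/
def IsVFactorizationSystem (E M : MorphismProperty B) : Prop :=
  IsVPrefactorization V B E M ∧ FactorizationsExist B E M

/-- `(E,M)` is an ordinary factorization system. -/
def IsOrdFactorizationSystem (E M : MorphismProperty B) : Prop :=
  IsOrdPrefactorization B E M ∧ FactorizationsExist B E M

/-- intersection of two classes of morphisms. -/
def interProp (M N : MorphismProperty B) : MorphismProperty B := fun _ _ f => M f ∧ N f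

/-- `V`-monomorphisms. -/
def vMono : MorphismProperty B := fun _ _ m => ∀ A : B, Mono (eHomWhiskerLeft V A m)

/-- `V`-epimorphisms. -/
def vEpi : MorphismProperty B := fun _ _ e => ∀ A : B, Mono (eHomWhiskerRight V e A)

/-- `V`-strong monomorphisms. -/
def vStrongMono : MorphismProperty B := fun _ _ m =>
  vMono V B m ∧ ∀ ⦃A₁ A₂ : B⦄ (e : A₁ ⟶ A₂), vEpi V B e → VOrth V B e m

/-- `V`-strong epimorphisms. -/
def vStrongEpi : MorphismProperty B := fun _ _ e =>
  vEpi V B e ∧ ∀ ⦃X₁ X₂ : B⦄ (m : X₁ ⟶ X₂), vMono V B m → VOrth V B e m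

/-- ordinary monomorphisms, as a class. -/
def ordMono : MorphismProperty B := fun _ _ m => Mono m

/-- ordinary epimorphisms, as a class. -/
def ordEpi : MorphismProperty B := fun _ _ e => Epi e

/-- ordinary strong monomorphisms. -/
def ordStrongMono : MorphismProperty B := fun _ _ m =>
  Mono m ∧ ∀ ⦃A₁ A₂ : B⦄ (e : A₁ ⟶ A₂), Epi e → OrdOrth B e m

/-- ordinary strong epimorphisms. -/
def ordStrongEpi : MorphismProperty B := fun _ _ e =>
  Epi e ∧ ∀ ⦃X₁ X₂ : B⦄ (m : X₁ ⟶ X₂), Mono m → OrdOrth B e m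

/-- closure under composition with isomorphisms on either side. -/
def ClosedUnderIsoComp (E : MorphismProperty B) : Prop :=
  (∀ ⦃X Y Z : B⦄ (e : X ⟶ Y) (i : Y ⟶ Z), E e → IsIso i → E (e ≫ i)) ∧
  (∀ ⦃X Y Z : B⦄ (i : X ⟶ Y) (e : Y ⟶ Z), IsIso i → E e → E (i ≫ e))

/-- a commutative square which is a `V`-pullback: it is sent to a pullback square
in `V` by every hom functor `B(A,-)`. -/
def IsVPullbackSq {P X Y Z : B} (p₁ : P ⟶ X) (p₂ : P ⟶ Y) (f : X ⟶ Z) (g : Y ⟶ Z) : Prop :=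
  p₁ ≫ f = p₂ ≫ g ∧
    ∀ A : B, IsPullback (eHomWhiskerLeft V A p₁) (eHomWhiskerLeft V A p₂)
      (eHomWhiskerLeft V A f) (eHomWhiskerLeft V A g)

/-- a commutative square which is a `V`-pushout: it is sent to a pullback square
in `V` by every hom functor `B(-,A)`. -/
def IsVPushoutSq {X Y₁ Y₂ Q : B} (f₁ : X ⟶ Y₁) (f₂ : X ⟶ Y₂) (i₁ : Y₁ ⟶ Q) (i₂ : Y₂ ⟶ Q) :
    Prop :=
  f₁ ≫ i₁ = f₂ ≫ i₂ ∧
    ∀ A : B, IsPullback (eHomWhiskerRight V i₁ A) (eHomWhiskerRight V i₂ A)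
      (eHomWhiskerRight V f₁ A) (eHomWhiskerRight V f₂ A)

/-- `B` has `V`-kernel pairs. -/
def HasVKernelPairs : Prop :=
  ∀ ⦃X Y : B⦄ (f : X ⟶ Y), ∃ (P : B) (p₁ p₂ : P ⟶ X), IsVPullbackSq V B p₁ p₂ f f

/-- `B` has `V`-cokernel pairs. -/
def HasVCokernelPairs : Prop :=
  ∀ ⦃X Y : B⦄ (f : X ⟶ Y), ∃ (Q : B) (i₁ i₂ : Y ⟶ Q), IsVPushoutSq V B f f i₁ i₂

/-- `m : P ⟶ C` is a `V`-fibre-product (`V`-wide-pullback) of the family `f i : X i ⟶ C`,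
with projections `π i`. -/
def IsVFibreProduct {ι : Type w} {C : B} {X : ι → B} (f : ∀ i, X i ⟶ C)
    {P : B} (m : P ⟶ C) (π : ∀ i, P ⟶ X i) : Prop :=
  (∀ i, π i ≫ f i = m) ∧
    ∀ (A : B) (Z : V) (z : Z ⟶ (A ⟶[V] C)) (zi : ∀ i, Z ⟶ (A ⟶[V] X i)),
      (∀ i, zi i ≫ eHomWhiskerLeft V A (f i) = z) →
        ∃! t : Z ⟶ (A ⟶[V] P), t ≫ eHomWhiskerLeft V A m = z ∧
          ∀ i, t ≫ eHomWhiskerLeft V A (π i) = zi i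

/-- `m : P ⟶ C` is an ordinary fibre product (wide pullback) of the family `f i : X i ⟶ C`. -/
def OrdIsFibreProduct {ι : Type w} {C : B} {X : ι → B} (f : ∀ i, X i ⟶ C)
    {P : B} (m : P ⟶ C) (π : ∀ i, P ⟶ X i) : Prop :=
  (∀ i, π i ≫ f i = m) ∧
    ∀ ⦃W' : B⦄ (z : W' ⟶ C) (zi : ∀ i, W' ⟶ X i), (∀ i, zi i ≫ f i = z) →
      ∃! t : W' ⟶ P, t ≫ m = z ∧ ∀ i, t ≫ π i = zi i

/-- a cone is a `V`-limit cone: it is sent to a limit cone in `V` by every `B(A,-)`. -/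
def IsVLimitCone {J : Type u₃} [Category.{v₃} J] {D : J ⥤ B} (c : Cone D) : Prop :=
  ∀ (A : B) (Z : V) (z : ∀ j : J, Z ⟶ (A ⟶[V] D.obj j)),
    (∀ ⦃j j' : J⦄ (φ : j ⟶ j'), z j ≫ eHomWhiskerLeft V A (D.map φ) = z j') →
      ∃! t : Z ⟶ (A ⟶[V] c.pt), ∀ j, t ≫ eHomWhiskerLeft V A (c.π.app j) = z j

/-- a cocone is a `V`-colimit cocone: it is sent to a limit cone in `V` by every `B(-,A)`. -/
def IsVColimitCocone {J : Type u₃} [Category.{v₃} J] {D : J ⥤ B} (c : Cocone D) : Prop :=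
  ∀ (A : B) (Z : V) (z : ∀ j : J, Z ⟶ (D.obj j ⟶[V] A)),
    (∀ ⦃j j' : J⦄ (φ : j ⟶ j'), z j' ≫ eHomWhiskerRight V (D.map φ) A = z j) →
      ∃! t : Z ⟶ (c.pt ⟶[V] A), ∀ j, t ≫ eHomWhiskerRight V (c.ι.app j) A = z j

/-- `B` has small `V`-limits. -/
def HasSmallVLimits : Prop :=
  ∀ (J : Type v₂) [SmallCategory J] (D : J ⥤ B), ∃ c : Cone D, IsVLimitCone V B c

/-- `B` has small `V`-colimits. -/
def HasSmallVColimits : Prop :=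
  ∀ (J : Type v₂) [SmallCategory J] (D : J ⥤ B), ∃ c : Cocone D, IsVColimitCocone V B c

/-- `B` has finite `V`-limits. -/
def HasFiniteVLimits : Prop :=
  ∀ (J : Type) [SmallCategory J] [FinCategory J] (D : J ⥤ B),
    ∃ c : Cone D, IsVLimitCone V B c

/-- `B` is well-powered with respect to the class `M`: every object has,
up to isomorphism, only a set of `M`-subobjects. -/
def WellPoweredWrt (M : MorphismProperty B) : Prop :=
  ∀ X : B, ∃ (ι : Type v₂) (Y : ι → B) (f : ∀ i, Y i ⟶ X), (∀ i, M (f i)) ∧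
    ∀ ⦃Z : B⦄ (g : Z ⟶ X), M g → ∃ (i : ι) (h : Z ≅ Y i), h.hom ≫ f i = g

/-- `B` is co-well-powered with respect to the class `E`. -/
def CoWellPoweredWrt (E : MorphismProperty B) : Prop :=
  ∀ X : B, ∃ (ι : Type v₂) (Y : ι → B) (f : ∀ i, X ⟶ Y i), (∀ i, E (f i)) ∧
    ∀ ⦃Z : B⦄ (g : X ⟶ Z), E g → ∃ (i : ι) (h : Y i ≅ Z), f i ≫ h.hom = g

/-- comparison morphism `B(T, X) ⟶ [v, B(A, X)]` in `V` induced by a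
unit `η : v ⟶ B(A, T)`, where `T` is a candidate tensor `v ⊗ A`. -/
def tensorComparison {v : V} {A T : B} (η : v ⟶ (A ⟶[V] T)) (X : B) :
    (T ⟶[V] X) ⟶ (ihom v).obj (A ⟶[V] X) :=
  MonoidalClosed.curry (eComp V A T X) ≫ (MonoidalClosed.pre η).app (A ⟶[V] X)

/-- `η : v ⟶ B(A,T)` exhibits `T` as a tensor `v ⊗ A` in the enriched sense. -/
def IsTensorUnit (v : V) (A T : B) (η : v ⟶ (A ⟶[V] T)) : Prop :=
  ∀ X : B, IsIso (tensorComparison V B η X)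

/-- `B` is tensored over `V`. -/
def Tensored : Prop :=
  ∀ (v : V) (A : B), ∃ (T : B) (η : v ⟶ (A ⟶[V] T)), IsTensorUnit V B v A T η

/-- `E` is closed under tensors: whenever tensors exist, `v ⊗ e` lies in `E` for `e ∈ E`. -/
def ClosedUnderTensors (E : MorphismProperty B) : Prop :=
  ∀ (v : V) ⦃A₁ A₂ : B⦄ (e : A₁ ⟶ A₂) {T₁ T₂ : B}
    (η₁ : v ⟶ (A₁ ⟶[V] T₁)) (η₂ : v ⟶ (A₂ ⟶[V] T₂)),
    IsTensorUnit V B v A₁ T₁ η₁ → IsTensorUnit V B v A₂ T₂ η₂ → E e →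
      ∀ t : T₁ ⟶ T₂, η₁ ≫ eHomWhiskerLeft V A₁ t = η₂ ≫ eHomWhiskerRight V e T₂ → E t

/-- comparison morphism `B(A, C) ⟶ [v, B(A, X)]` in `V` induced by a
counit `ε : v ⟶ B(C, X)`, where `C` is a candidate cotensor `[v, X]`. -/
def cotensorComparison {v : V} {C X : B} (ε : v ⟶ (C ⟶[V] X)) (A : B) :
    (A ⟶[V] C) ⟶ (ihom v).obj (A ⟶[V] X) :=
  MonoidalClosed.curry ((β_ (C ⟶[V] X) (A ⟶[V] C)).hom ≫ eComp V A C X) ≫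
    (MonoidalClosed.pre ε).app (A ⟶[V] X)

/-- `ε : v ⟶ B(C,X)` exhibits `C` as a cotensor `[v, X]` in the enriched sense. -/
def IsCotensorCounit (v : V) (X C : B) (ε : v ⟶ (C ⟶[V] X)) : Prop :=
  ∀ A : B, IsIso (cotensorComparison V B ε A)

/-- `B` is cotensored over `V`. -/
def Cotensored : Prop :=
  ∀ (v : V) (X : B), ∃ (C : B) (ε : v ⟶ (C ⟶[V] X)), IsCotensorCounit V B v X C ε

/-- `M` is closed under cotensors: `[v, m]` lies in `M` for `m ∈ M`. -/
def ClosedUnderCotensors (M : MorphismProperty B) : Prop :=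
  ∀ (v : V) ⦃X₁ X₂ : B⦄ (m : X₁ ⟶ X₂) {C₁ C₂ : B}
    (ε₁ : v ⟶ (C₁ ⟶[V] X₁)) (ε₂ : v ⟶ (C₂ ⟶[V] X₂)),
    IsCotensorCounit V B v X₁ C₁ ε₁ → IsCotensorCounit V B v X₂ C₂ ε₂ → M m →
      ∀ t : C₁ ⟶ C₂, ε₁ ≫ eHomWhiskerLeft V C₁ m = ε₂ ≫ eHomWhiskerRight V t X₂ → M t

/-- a `V`-functor from a `V`-category `J` to an enriched ordinary category `D`. -/
structure VFunctor (J : Type u₃) [EnrichedCategory V J]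
    (D : Type u₄) [Category.{v₄} D] [EnrichedOrdinaryCategory V D] where
  obj : J → D
  emap : ∀ X Y : J, (X ⟶[V] Y) ⟶ (obj X ⟶[V] obj Y)
  emap_id : ∀ X : J, eId V X ≫ emap X X = eId V (obj X)
  emap_comp : ∀ X Y Z : J,
    eComp V X Y Z ≫ emap X Z = (emap X Y ⊗ₘ emap Y Z) ≫ eComp V (obj X) (obj Y) (obj Z)

/-- the underlying action of a `V`-functor on ordinary morphisms. -/
def VFunctor.map' {J : Type u₃} [Category.{v₃} J] [EnrichedOrdinaryCategory V J]
    {D : Type u₄} [Category.{v₄} D] [EnrichedOrdinaryCategory V D]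
    (F : VFunctor V J D) {X Y : J} (f : X ⟶ Y) : F.obj X ⟶ F.obj Y :=
  (eHomEquiv V).symm (eHomEquiv V f ≫ F.emap X Y)

/-- a `V`-adjunction `F ⊣ G`, given by a `V`-natural isomorphism
`D(F A, X) ≅ A(A, G X)` of hom-objects. -/
structure VAdjunction {A : Type u₃} [Category.{v₃} A] [EnrichedOrdinaryCategory V A]
    {D : Type u₄} [Category.{v₄} D] [EnrichedOrdinaryCategory V D]
    (F : VFunctor V A D) (G : VFunctor V D A) where
  iso : ∀ (X : A) (Y : D), (F.obj X ⟶[V] Y) ≅ (X ⟶[V] G.obj Y)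
  nat_right : ∀ (X : A) (Y Y' : D),
    eComp V (F.obj X) Y Y' ≫ (iso X Y').hom =
      ((iso X Y).hom ⊗ₘ G.emap Y Y') ≫ eComp V X (G.obj Y) (G.obj Y')
  nat_left : ∀ (X X' : A) (Y : D),
    (F.emap X X' ▷ (F.obj X' ⟶[V] Y)) ≫ eComp V (F.obj X) (F.obj X') Y ≫ (iso X Y).hom =
      ((X ⟶[V] X') ◁ (iso X' Y).hom) ≫ eComp V X X' (G.obj Y)

/-- a `V`-functor `J → V` (a weight), presented by its uncurried action. -/
structure VWeight (J : Type u₃) [EnrichedCategory V J] where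
  obj : J → V
  act : ∀ j j' : J, obj j ⊗ (j ⟶[V] j') ⟶ obj j'
  act_id : ∀ j : J, (obj j ◁ eId V j) ≫ act j j = (ρ_ (obj j)).hom
  act_comp : ∀ j j' j'' : J,
    (α_ (obj j) (j ⟶[V] j') (j' ⟶[V] j'')).inv ≫ (act j j' ▷ (j' ⟶[V] j'')) ≫ act j' j'' =
      (obj j ◁ eComp V j j' j'') ≫ act j j''

/-- a `V`-natural transformation between `V`-functors. -/
structure VNatTrans {J : Type u₃} [EnrichedCategory V J]
    {D : Type u₄} [Category.{v₄} D] [EnrichedOrdinaryCategory V D]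
    (F G : VFunctor V J D) where
  app : ∀ j : J, F.obj j ⟶ G.obj j
  naturality : ∀ j j' : J,
    F.emap j j' ≫ eHomWhiskerLeft V (F.obj j) (app j') =
      G.emap j j' ≫ eHomWhiskerRight V (app j) (G.obj j')

/-- `cone` exhibits `L` as the `V`-enriched weighted (indexed) limit `[W, F]`. -/
structure IsWeightedLimit {J : Type u₃} [EnrichedCategory V J]
    {D : Type u₄} [Category.{v₄} D] [EnrichedOrdinaryCategory V D]
    (W : VWeight V J) (F : VFunctor V J D) (L : D)
    (cone : ∀ j : J, W.obj j ⟶ (L ⟶[V] F.obj j)) : Prop where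
  natural : ∀ j j' : J,
    W.act j j' ≫ cone j' =
      (cone j ▷ (j ⟶[V] j')) ≫ ((L ⟶[V] F.obj j) ◁ F.emap j j') ≫
        eComp V L (F.obj j) (F.obj j')
  universal : ∀ (A : D) (Z : V) (μ : ∀ j : J, Z ⊗ W.obj j ⟶ (A ⟶[V] F.obj j)),
    (∀ j j' : J,
      (Z ◁ W.act j j') ≫ μ j' =
        (α_ Z (W.obj j) (j ⟶[V] j')).inv ≫ (μ j ▷ (j ⟶[V] j')) ≫
          ((A ⟶[V] F.obj j) ◁ F.emap j j') ≫ eComp V A (F.obj j) (F.obj j')) →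
      ∃! t : Z ⟶ (A ⟶[V] L), ∀ j : J,
        (t ▷ W.obj j) ≫ ((A ⟶[V] L) ◁ cone j) ≫ eComp V A L (F.obj j) = μ j

/-- `B` is `V`-finitely-well-complete: it has finite `V`-limits and `V`-intersections
of arbitrary class-indexed families of `V`-strong monomorphisms. -/
def VFinitelyWellComplete : Prop :=
  HasFiniteVLimits V B ∧
    ∀ {ι : Type (max u₂ v₂)} {C : B} (X : ι → B) (f : ∀ i, X i ⟶ C),
      (∀ i, vStrongMono V B (f i)) →
        ∃ (P : B) (m : P ⟶ C) (π : ∀ i, P ⟶ X i), IsVFibreProduct V B f m π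

/-- `B` is finitely well-complete (ordinary sense): it has finite limits and
intersections of arbitrary class-indexed families of strong monomorphisms. -/
def OrdFinitelyWellComplete : Prop :=
  HasFiniteLimits B ∧
    ∀ {ι : Type (max u₂ v₂)} {C : B} (X : ι → B) (f : ∀ i, X i ⟶ C),
      (∀ i, ordStrongMono B (f i)) →
        ∃ (P : B) (m : P ⟶ C) (π : ∀ i, P ⟶ X i), OrdIsFibreProduct B f m π

section Aux

variable {V B}

omit [SymmetricCategory V] [MonoidalClosed V]

lemma eHomEquiv_comp_left' {X Y Z : B} (f : X ⟶ Y) (g : Y ⟶ Z) :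
    eHomEquiv V (f ≫ g) = eHomEquiv V f ≫ eHomWhiskerLeft V X g := by
  simp only [eHomWhiskerLeft, eHomEquiv_comp, MonoidalCategory.tensorHom_def]
  rw [unitors_inv_equal]
  simp

lemma eHomEquiv_comp_right' {X Y Z : B} (f : X ⟶ Y) (g : Y ⟶ Z) :
    eHomEquiv V (f ≫ g) = eHomEquiv V g ≫ eHomWhiskerRight V f Z := by
  simp only [eHomWhiskerRight, eHomEquiv_comp, tensorHom_def']
  rw [leftUnitor_inv_naturality_assoc]
  simp

lemma comp_eq_of_eHom_left {X Y Z : B} {t : 𝟙_ V ⟶ (X ⟶[V] Y)} {g : Y ⟶ Z} {v : X ⟶ Z}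
    (h : t ≫ eHomWhiskerLeft V X g = eHomEquiv V v) :
    (eHomEquiv V).symm t ≫ g = v := by
  apply (eHomEquiv V).injective
  rw [eHomEquiv_comp_left', Equiv.apply_symm_apply, h]

lemma comp_eq_of_eHom_right {X Y Z : B} {t : 𝟙_ V ⟶ (Y ⟶[V] Z)} {f : X ⟶ Y} {v : X ⟶ Z}
    (h : t ≫ eHomWhiskerRight V f Z = eHomEquiv V v) :
    f ≫ (eHomEquiv V).symm t = v := by
  apply (eHomEquiv V).injective
  rw [eHomEquiv_comp_right', Equiv.apply_symm_apply, h]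

lemma splitEpi_vEpi {P X : B} (p : P ⟶ X) (s : X ⟶ P) (hs : s ≫ p = 𝟙 X) :
    vEpi V B p := by
  intro A
  refine ⟨fun {Z} f g hfg => ?_⟩
  have h : eHomWhiskerRight V p A ≫ eHomWhiskerRight V s A = 𝟙 _ := by
    rw [← eHomWhiskerRight_comp, hs, eHomWhiskerRight_id]
  rw [← Category.comp_id f, ← Category.comp_id g, ← h, ← Category.assoc, ← Category.assoc, hfg]

lemma splitMono_vMono {X Q : B} (i : X ⟶ Q) (r : Q ⟶ X) (hr : i ≫ r = 𝟙 X) :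
    vMono V B i := by
  intro A
  refine ⟨fun {Z} f g hfg => ?_⟩
  have h : eHomWhiskerLeft V A i ≫ eHomWhiskerLeft V A r = 𝟙 _ := by
    rw [← eHomWhiskerLeft_comp, hr, eHomWhiskerLeft_id]
  rw [← Category.comp_id f, ← Category.comp_id g, ← h, ← Category.assoc, ← Category.assoc, hfg]

lemma splitMono_vStrongMono {X Q : B} (i : X ⟶ Q) (r : Q ⟶ X) (hr : i ≫ r = 𝟙 X) :
    vStrongMono V B i := by
  refine ⟨splitMono_vMono i r hr, fun {C₁ C₂} e he => ?_⟩
  have comm : eHomWhiskerLeft V C₂ i ≫ eHomWhiskerRight V e Q =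
      eHomWhiskerRight V e X ≫ eHomWhiskerLeft V C₁ i := eHom_whisker_exchange V e i
  have hmonoQ : Mono (eHomWhiskerRight V e Q) := he Q
  have hmono2 : Mono (eHomWhiskerLeft V C₂ i) := (splitMono_vMono i r hr) C₂
  apply IsPullback.of_isLimit (c := PullbackCone.mk _ _ comm)
  refine PullbackCone.IsLimit.mk comm
    (fun sc => sc.fst ≫ eHomWhiskerLeft V C₂ r) (fun sc => ?_) (fun sc => ?_) (fun sc t ht _ => ?_)
  · -- lift ≫ eHomWhiskerLeft V C₂ i = sc.fst
    rw [← cancel_mono (eHomWhiskerRight V e Q)]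
    rw [Category.assoc, Category.assoc, comm, eHom_whisker_exchange_assoc, sc.condition_assoc,
      ← eHomWhiskerLeft_comp, ← eHomWhiskerLeft_comp,
      show i ≫ r ≫ i = i by rw [← Category.assoc, hr, Category.id_comp]]
    exact sc.condition.symm
  · -- lift ≫ eHomWhiskerRight V e X = sc.snd
    rw [Category.assoc, eHom_whisker_exchange, sc.condition_assoc, ← eHomWhiskerLeft_comp, hr,
      eHomWhiskerLeft_id, Category.comp_id]
  · -- uniqueness
    show t = sc.fst ≫ eHomWhiskerLeft V C₂ r
    rw [← ht, Category.assoc, ← eHomWhiskerLeft_comp, hr, eHomWhiskerLeft_id, Category.comp_id]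

lemma VOrth.ordOrth {A₁ A₂ X₁ X₂ : B} {e : A₁ ⟶ A₂} {m : X₁ ⟶ X₂} (h : VOrth V B e m) :
    OrdOrth B e m := by
  have hpb : IsPullback (eHomWhiskerLeft V A₂ m) (eHomWhiskerRight V e X₁)
      (eHomWhiskerRight V e X₂) (eHomWhiskerLeft V A₁ m) := h
  intro u v huv
  have comm : eHomEquiv V v ≫ eHomWhiskerRight V e X₂ =
      eHomEquiv V u ≫ eHomWhiskerLeft V A₁ m := by
    rw [← eHomEquiv_comp_right', ← eHomEquiv_comp_left', huv]
  refine ⟨(eHomEquiv V).symm (hpb.lift (eHomEquiv V v) (eHomEquiv V u) comm), ⟨?_, ?_⟩, ?_⟩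
  · exact comp_eq_of_eHom_right (hpb.lift_snd _ _ _)
  · exact comp_eq_of_eHom_left (hpb.lift_fst _ _ _)
  · intro d₂ hd₂
    have hlift : eHomEquiv V d₂ = hpb.lift (eHomEquiv V v) (eHomEquiv V u) comm := by
      apply hpb.hom_ext
      · rw [hpb.lift_fst, ← eHomEquiv_comp_left', hd₂.2]
      · rw [hpb.lift_snd, ← eHomEquiv_comp_right', hd₂.1]
    rw [← hlift, Equiv.symm_apply_apply]

lemma vRlp_vEpi_vMono {X₁ X₂ : B} (m : X₁ ⟶ X₂)
    (hP : ∃ (P : B) (p₁ p₂ : P ⟶ X₁), IsVPullbackSq V B p₁ p₂ m m)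
    (hm : vRlp V B (vEpi V B) m) : vMono V B m := by
  obtain ⟨P, p₁, p₂, hcomm, hpb⟩ := hP
  -- the diagonal, a section of `p₁`
  obtain ⟨Δ', hΔ₁, -⟩ :
      ∃ t : 𝟙_ V ⟶ (X₁ ⟶[V] P), t ≫ eHomWhiskerLeft V X₁ p₁ = eHomEquiv V (𝟙 X₁) ∧
        t ≫ eHomWhiskerLeft V X₁ p₂ = eHomEquiv V (𝟙 X₁) :=
    ⟨(hpb X₁).lift (eHomEquiv V (𝟙 X₁)) (eHomEquiv V (𝟙 X₁)) rfl,
      (hpb X₁).lift_fst _ _ _, (hpb X₁).lift_snd _ _ _⟩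
  have hΔ : (eHomEquiv V).symm Δ' ≫ p₁ = 𝟙 X₁ := comp_eq_of_eHom_left hΔ₁
  have hp₁ : vEpi V B p₁ := splitEpi_vEpi p₁ _ hΔ
  -- the filler for the kernel-pair square
  obtain ⟨d, ⟨hd, -⟩, -⟩ := (hm p₁ hp₁).ordOrth p₂ m hcomm.symm
  intro A
  refine ⟨fun {Z} f g hfg => ?_⟩
  have hwl : eHomWhiskerLeft V A p₂ = eHomWhiskerLeft V A p₁ ≫ eHomWhiskerLeft V A d := by
    rw [← eHomWhiskerLeft_comp, hd]
  obtain ⟨w, hw₁, hw₂⟩ : ∃ w : Z ⟶ (A ⟶[V] P),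
      w ≫ eHomWhiskerLeft V A p₁ = f ∧ w ≫ eHomWhiskerLeft V A p₂ = f :=
    ⟨(hpb A).lift f f rfl, (hpb A).lift_fst _ _ _, (hpb A).lift_snd _ _ _⟩
  obtain ⟨w', hw₁', hw₂'⟩ : ∃ w' : Z ⟶ (A ⟶[V] P),
      w' ≫ eHomWhiskerLeft V A p₁ = f ∧ w' ≫ eHomWhiskerLeft V A p₂ = g :=
    ⟨(hpb A).lift f g hfg, (hpb A).lift_fst _ _ _, (hpb A).lift_snd _ _ _⟩
  calc f = w ≫ eHomWhiskerLeft V A p₂ := hw₂.symm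
    _ = f ≫ eHomWhiskerLeft V A d := by rw [hwl, ← Category.assoc, hw₁]
    _ = w' ≫ eHomWhiskerLeft V A p₂ := by rw [hwl, ← Category.assoc, hw₁']
    _ = g := hw₂'

lemma vLlp_vStrongMono_vEpi {A₁ A₂ : B} (e : A₁ ⟶ A₂)
    (hQ : ∃ (Q : B) (i₁ i₂ : A₂ ⟶ Q), IsVPushoutSq V B e e i₁ i₂)
    (he : vLlp V B (vStrongMono V B) e) : vEpi V B e := by
  obtain ⟨Q, i₁, i₂, hcomm, hpo⟩ := hQ
  -- the codiagonal, a retraction of `i₁`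
  obtain ⟨nab, hnab1, -⟩ :
      ∃ t : 𝟙_ V ⟶ (Q ⟶[V] A₂), t ≫ eHomWhiskerRight V i₁ A₂ = eHomEquiv V (𝟙 A₂) ∧
        t ≫ eHomWhiskerRight V i₂ A₂ = eHomEquiv V (𝟙 A₂) :=
    ⟨(hpo A₂).lift (eHomEquiv V (𝟙 A₂)) (eHomEquiv V (𝟙 A₂)) rfl,
      (hpo A₂).lift_fst _ _ _, (hpo A₂).lift_snd _ _ _⟩
  have hnab : i₁ ≫ (eHomEquiv V).symm nab = 𝟙 A₂ := comp_eq_of_eHom_right hnab1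
  have hi₁ : vStrongMono V B i₁ := splitMono_vStrongMono i₁ _ hnab
  -- the filler for the cokernel-pair square
  obtain ⟨d, ⟨-, hd⟩, -⟩ := (he i₁ hi₁).ordOrth e i₂ hcomm
  intro A
  refine ⟨fun {Z} f g hfg => ?_⟩
  have hwr : eHomWhiskerRight V i₂ A = eHomWhiskerRight V i₁ A ≫ eHomWhiskerRight V d A := by
    rw [← eHomWhiskerRight_comp, hd]
  obtain ⟨w, hw₁, hw₂⟩ : ∃ w : Z ⟶ (Q ⟶[V] A),
      w ≫ eHomWhiskerRight V i₁ A = f ∧ w ≫ eHomWhiskerRight V i₂ A = f :=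
    ⟨(hpo A).lift f f rfl, (hpo A).lift_fst _ _ _, (hpo A).lift_snd _ _ _⟩
  obtain ⟨w', hw₁', hw₂'⟩ : ∃ w' : Z ⟶ (Q ⟶[V] A),
      w' ≫ eHomWhiskerRight V i₁ A = f ∧ w' ≫ eHomWhiskerRight V i₂ A = g :=
    ⟨(hpo A).lift f g hfg, (hpo A).lift_fst _ _ _, (hpo A).lift_snd _ _ _⟩
  calc f = w ≫ eHomWhiskerRight V i₂ A := hw₂.symm
    _ = f ≫ eHomWhiskerRight V d A := by rw [hwr, ← Category.assoc, hw₁]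
    _ = w' ≫ eHomWhiskerRight V i₂ A := by rw [hwr, ← Category.assoc, hw₁']
    _ = g := hw₂'

end Aux

/-- If `B` has `V`-kernel pairs then `StrMono_V B = (Epi_V B)^{↓V}`; if moreover `B`
has `V`-cokernel pairs then `Epi_V B = (StrMono_V B)^{↑V}`, so that
`(Epi_V B, StrMono_V B)` is a `V`-prefactorization system. -/
theorem stmt8 (hkp : HasVKernelPairs V B) :
    vStrongMono V B = vRlp V B (vEpi V B) ∧
      (HasVCokernelPairs V B →
        vEpi V B = vLlp V B (vStrongMono V B) ∧
          IsVPrefactorization V B (vEpi V B) (vStrongMono V B)) := by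
  have h1 : vStrongMono V B = vRlp V B (vEpi V B) := by
    funext X₁ X₂ m
    apply propext
    constructor
    · exact fun hm A₁ A₂ e hevEpi => hm.2 e hevEpi
    · exact fun hm => ⟨vRlp_vEpi_vMono m (hkp m) hm, fun A₁ A₂ e hevEpi => hm e hevEpi⟩
  refine ⟨h1, fun hckp => ?_⟩
  have h2 : vEpi V B = vLlp V B (vStrongMono V B) := by
    funext A₁ A₂ e
    apply propext
    constructor
    · exact fun hevEpi X₁ X₂ m hm => hm.2 e hevEpi
    · exact fun hvl => vLlp_vStrongMono_vEpi e (hckp e) hvl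
  exact ⟨h2, h1.symm, h2.symm⟩

end EnrichedFS
end

section
/- Every right V-adjoint V-functor preserves V-strong-monomorphisms: if F ⊣ G : B → A is a V-adjunction and m is a V-strong-monomorphism in B, then Gm is a V-strong-monomorphism in A. Dually, every left V-adjoint V-functor preserves V-strong-epimorphisms. -/
open CategoryTheory CategoryTheory.Limits CategoryTheory.MonoidalCategory

universe w v₁ v₂ v₃ v₄ u₁ u₂ u₃ u₄

namespace EnrichedFS

variable (V : Type u₁) [Category.{v₁} V] [MonoidalCategory V] [SymmetricCategory V]
  [MonoidalClosed V]
variable (B : Type u₂) [Category.{v₂} B] [EnrichedOrdinaryCategory V B]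

section Aux

variable {A : Type u₃} [Category.{v₃} A] [EnrichedOrdinaryCategory V A]
  (F : VFunctor V A B) (G : VFunctor V B A) (adj : VAdjunction V F G)

/-- naturality of the adjunction isomorphism in the right variable, at the level of
whiskering by an ordinary morphism. -/
lemma adj_natR (X : A) {Y Y' : B} (f : Y ⟶ Y') :
    (adj.iso X Y).hom ≫ eHomWhiskerLeft V X (VFunctor.map' V G f) =
      eHomWhiskerLeft V (F.obj X) f ≫ (adj.iso X Y').hom := by
  dsimp [eHomWhiskerLeft, VFunctor.map']
  rw [Equiv.apply_symm_apply, MonoidalCategory.whiskerLeft_comp,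
    rightUnitor_inv_naturality_assoc]
  simp only [Category.assoc]
  rw [← whisker_exchange_assoc, ← tensorHom_def_assoc, ← adj.nat_right]

/-- naturality of the adjunction isomorphism in the left variable, at the level of
whiskering by an ordinary morphism. -/
lemma adj_natL {X X' : A} (e : X ⟶ X') (Y : B) :
    eHomWhiskerRight V (VFunctor.map' V F e) Y ≫ (adj.iso X Y).hom =
      (adj.iso X' Y).hom ≫ eHomWhiskerRight V e (G.obj Y) := by
  dsimp [eHomWhiskerRight, VFunctor.map']
  rw [Equiv.apply_symm_apply, comp_whiskerRight]
  simp only [Category.assoc]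
  rw [adj.nat_left, ← whisker_exchange_assoc, ← leftUnitor_inv_naturality_assoc]

/-- rearranging an iso-conjugation square. -/
lemma iso_flip {C : Type*} [Category C] {P P' Q Q' : C} (a : P ≅ P') (b : Q ≅ Q')
    {p : P' ⟶ Q'} {q : P ⟶ Q} (h : a.hom ≫ p = q ≫ b.hom) : p ≫ b.inv = a.inv ≫ q := by
  rw [Iso.comp_inv_eq, Category.assoc, ← h, Iso.inv_hom_id_assoc]

end Aux

/-- Every right `V`-adjoint `V`-functor preserves `V`-strong monomorphisms; dually,
every left `V`-adjoint `V`-functor preserves `V`-strong epimorphisms. -/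
theorem stmt11 {A : Type u₃} [Category.{v₃} A] [EnrichedOrdinaryCategory V A]
    (F : VFunctor V A B) (G : VFunctor V B A) (adj : VAdjunction V F G) :
    (∀ ⦃X Y : B⦄ (m : X ⟶ Y), vStrongMono V B m →
      vStrongMono V A (VFunctor.map' V G m)) ∧
    (∀ ⦃X Y : A⦄ (e : X ⟶ Y), vStrongEpi V A e →
      vStrongEpi V B (VFunctor.map' V F e)) := by
  have natR := adj_natR V B F G adj
  have natL : ∀ {X X' : A} (e : X ⟶ X') (Z : B),
      eHomWhiskerRight V (VFunctor.map' V F e) Z ≫ (adj.iso X Z).hom =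
        (adj.iso X' Z).hom ≫ eHomWhiskerRight V e (G.obj Z) :=
    fun e Z => adj_natL V B F G adj e Z
  have hGm : ∀ {X Y : B} (m : X ⟶ Y) (A' : A),
      eHomWhiskerLeft V A' (VFunctor.map' V G m) =
        (adj.iso A' X).inv ≫ eHomWhiskerLeft V (F.obj A') m ≫ (adj.iso A' Y).hom := by
    intro X Y m A'
    rw [← natR A' m, Iso.inv_hom_id_assoc]
  have hFe : ∀ {X Y : A} (e : X ⟶ Y) (Z : B),
      eHomWhiskerRight V (VFunctor.map' V F e) Z =
        (adj.iso Y Z).hom ≫ eHomWhiskerRight V e (G.obj Z) ≫ (adj.iso X Z).inv := by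
    intro X Y e Z
    rw [← Category.assoc, ← natL e Z, Category.assoc, Iso.hom_inv_id, Category.comp_id]
  have FepreservesVEpi : ∀ {X Y : A} (e : X ⟶ Y), vEpi V A e →
      vEpi V B (VFunctor.map' V F e) := by
    intro X Y e he Z
    rw [hFe e Z]
    haveI := he (G.obj Z)
    infer_instance
  have GpreservesVMono : ∀ {X Y : B} (m : X ⟶ Y), vMono V B m →
      vMono V A (VFunctor.map' V G m) := by
    intro X Y m hm A'
    rw [hGm m A']
    haveI := hm (F.obj A')
    infer_instance
  constructor
  · intro X Y m hm
    refine ⟨GpreservesVMono m hm.1, ?_⟩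
    intro A₁ A₂ e he
    exact IsPullback.of_iso (hm.2 (VFunctor.map' V F e) (FepreservesVEpi e he))
      (adj.iso A₂ X) (adj.iso A₂ Y) (adj.iso A₁ X) (adj.iso A₁ Y)
      (natR A₂ m).symm (natL e X) (natL e Y) (natR A₁ m).symm
  · intro X Y e he
    refine ⟨FepreservesVEpi e he.1, ?_⟩
    intro X₁ X₂ m hm
    exact IsPullback.of_iso (he.2 (VFunctor.map' V G m) (GpreservesVMono m hm))
      (adj.iso Y X₁).symm (adj.iso Y X₂).symm (adj.iso X X₁).symm (adj.iso X X₂).symm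
      (iso_flip _ _ (natR Y m)) (iso_flip _ _ (natL e X₁).symm)
      (iso_flip _ _ (natL e X₂).symm) (iso_flip _ _ (natR X m))

end EnrichedFS
end
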